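/- Fix t > 0. Let L be a linear superoperator on 2^n × 2^n complex matrices such that for every s ≥ 0 the map e^{sL} is trace preserving and maps density matrices to density matrices. Then for every density matrix σ₀, the time-averaged state σ̄ := (1/t) ∫₀ᵗ e^{sL}[σ₀] ds satisfies ‖L[σ̄]‖₁ ≤ 2/t; in particular σ̄ is (2/t)-metastable. -/

import Mathlib

open MeasureTheory Matrix
open scoped Kronecker ComplexOrder

noncomputable section

namespace QMS

attribute [local instance] Matrix.frobeniusNormedAddCommGroup Matrix.frobeniusNormedSpace

variable {m : Type*} [Fintype m] [DecidableEq m]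

/-- Index type for an `n`-qubit system. -/
abbrev QIdx (n : ℕ) := Fin n → Fin 2

/-- The operator (spectral) norm of a matrix. -/
def opNorm (M : Matrix m m ℂ) : ℝ := ‖Matrix.toEuclideanCLM (𝕜 := ℂ) M‖

/-- The squared Frobenius (Schatten-2) norm. -/
def frobNormSq (M : Matrix m m ℂ) : ℝ := ((Mᴴ * M).trace).re

/-- The trace (Schatten-1) norm. -/
def traceNorm (M : Matrix m m ℂ) : ℝ :=
  (((Matrix.posSemidef_conjTranspose_mul_self M).1.eigenvectorUnitary : Matrix m m ℂ) *
      Matrix.diagonal (fun i => ((Real.sqrt ((Matrix.posSemidef_conjTranspose_mul_self M).1.eigenvalues i) : ℝ) : ℂ)) *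
      (star (Matrix.posSemidef_conjTranspose_mul_self M).1.eigenvectorUnitary : Matrix m m ℂ)).trace.re

/-- Functional calculus for Hermitian matrices (junk value `0` otherwise). -/
def matFun (f : ℝ → ℝ) (M : Matrix m m ℂ) : Matrix m m ℂ :=
  @dite _ (M.IsHermitian) (Classical.dec _)
    (fun h => (h.eigenvectorUnitary : Matrix m m ℂ) *
        Matrix.diagonal (fun i => (f (h.eigenvalues i) : ℂ)) *
        star (h.eigenvectorUnitary : Matrix m m ℂ))
    (fun _ => 0)

/-- Real matrix power via functional calculus. -/
def mpow (M : Matrix m m ℂ) (s : ℝ) : Matrix m m ℂ := matFun (fun x => x ^ s) M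

/-- Matrix logarithm via functional calculus. -/
def mlog (M : Matrix m m ℂ) : Matrix m m ℂ := matFun Real.log M

/-- Matrix square root via functional calculus. -/
def msqrt (M : Matrix m m ℂ) : Matrix m m ℂ := mpow M (1/2 : ℝ)

/-- The von Neumann entropy `S(σ) = -Tr[σ log σ]`. -/
def entropy (M : Matrix m m ℂ) : ℝ :=
  @dite _ (M.IsHermitian) (Classical.dec _)
    (fun h => -∑ i, h.eigenvalues i * Real.log (h.eigenvalues i)) (fun _ => 0)

/-- Matrix exponential. -/
def mexp (M : Matrix m m ℂ) : Matrix m m ℂ := NormedSpace.exp M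

/-- The Gibbs state `ρ = e^{-βH}/Tr[e^{-βH}]`. -/
def gibbs (H : Matrix m m ℂ) (β : ℝ) : Matrix m m ℂ :=
  ((mexp ((-(β : ℂ)) • H)).trace)⁻¹ • mexp ((-(β : ℂ)) • H)

/-- Heisenberg evolution `A(t) = e^{iHt} A e^{-iHt}`. -/
def heis (H A : Matrix m m ℂ) (t : ℝ) : Matrix m m ℂ :=
  mexp ((Complex.I * (t : ℂ)) • H) * A * mexp ((-(Complex.I * (t : ℂ))) • H)

/-- The Gaussian time filter `f_ς(t)`. -/
def fG (ς t : ℝ) : ℝ := Real.exp (-(ς^2 * t^2)) * Real.sqrt (ς * Real.sqrt (2 / Real.pi))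

/-- The Fourier transform `f̂_ς(ω)` of the Gaussian filter. -/
def fGhat (ς ω : ℝ) : ℝ :=
  Real.exp (-(ω^2 / (4 * ς^2))) / Real.sqrt (ς * Real.sqrt (2 * Real.pi))

/-- The operator Fourier transform `Â(ω)`. -/
def oft (H : Matrix m m ℂ) (ς : ℝ) (A : Matrix m m ℂ) (ω : ℝ) : Matrix m m ℂ :=
  (1 / Real.sqrt (2 * Real.pi)) •
    ∫ t : ℝ, (Complex.exp (-(Complex.I * (ω : ℂ) * (t : ℂ))) * ((fG ς t : ℝ) : ℂ)) • heis H A t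

/-- The time-evolved operator Fourier transform `Â(ω, t)`. -/
def oft2 (H : Matrix m m ℂ) (ς : ℝ) (A : Matrix m m ℂ) (ω t : ℝ) : Matrix m m ℂ :=
  heis H (oft H ς A ω) t

/-- The shifted Metropolis weight `γ(ω)`. -/
def metro (β ς ω : ℝ) : ℝ := Real.exp (-(β * max (ω + β * ς^2 / 2) 0))

/-- The Dirichlet frequency filter `h(ω)`. -/
def hFil (β ς ω : ℝ) : ℝ := Real.exp (-(ς^2 * β^2 / 8)) * Real.exp (-(|ω| * β / 2))

/-- The Dirichlet time filter `g(t)`. -/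
def gFil (β t : ℝ) : ℝ := 1 / (β * Real.cosh (2 * Real.pi * t / β))

/-- The coherent-term time filter `c(t)`. -/
def cFil (β t : ℝ) : ℝ := 1 / (β * Real.sinh (2 * Real.pi * t / β))

/-- The `s`-weighted frequency filter `h_s(ω)`. -/
def hFilS (β ς s ω : ℝ) : ℝ :=
  Real.exp (s * β * (2 * ω - s * β * ς^2) / 2) * hFil β ς (ω - s * β * ς^2)

/-- The `s`-weighted time filter `g_s(t)`. -/
def gFilS (β s t : ℝ) : ℝ :=
  (2 / β) * (Real.cos (s * Real.pi) * Real.cosh (2 * Real.pi * t / β)) /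
    (Real.cosh (4 * Real.pi * t / β) + Real.cos (2 * s * Real.pi))

/-- The ADB time filter `g^{ADB}_s(t)`. -/
def gADB (β s t : ℝ) : ℝ :=
  (1 / (2 * Real.pi * β)) *
    Real.log ((Real.cosh (2 * Real.pi * t / β) + Real.cos (s * Real.pi)) /
      (Real.cosh (2 * Real.pi * t / β) - Real.cos (s * Real.pi)))

/-- The coherent term `C^a`. -/
def coherent (H : Matrix m m ℂ) (β ς : ℝ) (A : Matrix m m ℂ) : Matrix m m ℂ :=
  ∫ t : ℝ, ∫ ω : ℝ, ((metro β ς ω * cFil β t : ℝ)) • ((oft2 H ς A ω t)ᴴ * oft2 H ς A ω t)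

/-- The local (KMS detailed balanced) Lindbladian `L_a` with jump `A`. -/
def lindblad (H : Matrix m m ℂ) (β ς : ℝ) (A X : Matrix m m ℂ) : Matrix m m ℂ :=
  (-Complex.I) • (coherent H β ς A * X - X * coherent H β ς A) +
    ∫ ω : ℝ, (metro β ς ω : ℝ) •
      (oft H ς A ω * X * (oft H ς A ω)ᴴ -
        (2⁻¹ : ℂ) • ((oft H ς A ω)ᴴ * oft H ς A ω * X + X * ((oft H ς A ω)ᴴ * oft H ς A ω)))

/-- The Heisenberg picture (Hilbert-Schmidt adjoint) Lindbladian `L_a†`. -/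
def lindbladDag (H : Matrix m m ℂ) (β ς : ℝ) (A Y : Matrix m m ℂ) : Matrix m m ℂ :=
  Complex.I • (coherent H β ς A * Y - Y * coherent H β ς A) +
    ∫ ω : ℝ, (metro β ς ω : ℝ) •
      ((oft H ς A ω)ᴴ * Y * oft H ς A ω -
        (2⁻¹ : ℂ) • ((oft H ς A ω)ᴴ * oft H ς A ω * Y + Y * ((oft H ς A ω)ᴴ * oft H ς A ω)))

/-- The Hilbert-Schmidt adjoint of a superoperator. -/
def hsAdj (Φ : Matrix m m ℂ → Matrix m m ℂ) (Y : Matrix m m ℂ) : Matrix m m ℂ :=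
  ∑ a : m, ∑ b : m,
    (((Φ (Matrix.single a b 1))ᴴ * Y).trace) • Matrix.single a b 1

/-- A superoperator is trace preserving. -/
def TracePreserving (Φ : Matrix m m ℂ → Matrix m m ℂ) : Prop :=
  ∀ X, (Φ X).trace = X.trace

/-- A superoperator is completely positive. -/
def IsCP (Φ : Matrix m m ℂ → Matrix m m ℂ) : Prop :=
  ∀ (k : ℕ) (X : Matrix (m × Fin k) (m × Fin k) ℂ), X.PosSemidef →
    (Matrix.of fun p q : m × Fin k =>
      Φ (Matrix.of fun a b => X (a, p.2) (b, q.2)) p.1 q.1).PosSemidef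

/-- The exponential `e^{sL}` of a superoperator `L`. -/
def superExp (L : Matrix m m ℂ → Matrix m m ℂ) (s : ℝ) (X : Matrix m m ℂ) : Matrix m m ℂ :=
  ∑' k : ℕ, ((s ^ k / (Nat.factorial k) : ℝ)) • L^[k] X

/-- The time-averaging map `R_t[X] = (1/t) ∫₀ᵗ e^{sL}[X] ds`. -/
def timeAvg (L : Matrix m m ℂ → Matrix m m ℂ) (t : ℝ) (X : Matrix m m ℂ) : Matrix m m ℂ :=
  (1 / t) • ∫ s in (0 : ℝ)..t, superExp L s X

/-- The squared `(σ, s)`-weighted norm `‖X‖²_{σ,s} = Tr[X† σ^{1/2+s} X σ^{1/2-s}]`. -/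
def wNormSq (σ : Matrix m m ℂ) (s : ℝ) (X : Matrix m m ℂ) : ℝ :=
  ((Xᴴ * mpow σ (1/2 + s) * X * mpow σ (1/2 - s)).trace).re

/-- Approximate detailed balance error `ADB_a[σ]`. -/
def adb (H : Matrix m m ℂ) (β ς : ℝ) (A σ : Matrix m m ℂ) : ℝ :=
  ∫ t : ℝ, ∫ ω : ℝ,
    frobNormSq (oft2 H ς A ω t * msqrt σ -
        msqrt σ * mpow (gibbs H β) (-(1/2 : ℝ)) * oft2 H ς A ω t * mpow (gibbs H β) (1/2 : ℝ)) *
      metro β ς ω * gFil β t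

/-- The relative Fisher information `FI_a[σ‖ρ]`. -/
def fisherInfo (H : Matrix m m ℂ) (β ς : ℝ) (A σ : Matrix m m ℂ) : ℝ :=
  ∫ t : ℝ, ∫ ω : ℝ, ∫ s in (-(1/2) : ℝ)..(1/2 : ℝ),
    wNormSq σ s (oft2 H ς A ω t * (mlog σ - mlog (gibbs H β)) -
        (mlog σ - mlog (gibbs H β)) * oft2 H ς A ω t) *
      hFilS β ς s ω * gFilS β s t

/-- The set of Bohr frequencies of a Hermitian matrix. -/
def bohrSet {H : Matrix m m ℂ} (hH : H.IsHermitian) : Finset ℝ :=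
  Finset.image (fun p : m × m => hH.eigenvalues p.1 - hH.eigenvalues p.2) Finset.univ

/-- The Bohr-frequency component `X_ν`. -/
def bohrComp {H : Matrix m m ℂ} (hH : H.IsHermitian) (X : Matrix m m ℂ) (ν : ℝ) :
    Matrix m m ℂ :=
  (hH.eigenvectorUnitary : Matrix m m ℂ) *
    (Matrix.of fun i j =>
      @ite _ (hH.eigenvalues i - hH.eigenvalues j = ν) (Classical.dec _)
        ((star (hH.eigenvectorUnitary : Matrix m m ℂ) * X *
          (hH.eigenvectorUnitary : Matrix m m ℂ)) i j) 0) *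
    star (hH.eigenvectorUnitary : Matrix m m ℂ)

/- n-qubit machinery -/

/-- The single qubit Pauli matrices `I, X, Y, Z`. -/
def pauli1 : Fin 4 → Matrix (Fin 2) (Fin 2) ℂ :=
  ![1, !![0, 1; 1, 0], !![0, -Complex.I; Complex.I, 0], !![1, 0; 0, -1]]

/-- The Pauli string `⊗_i P_{p i}`. -/
def pauliString {n : ℕ} (p : Fin n → Fin 4) : Matrix (QIdx n) (QIdx n) ℂ :=
  Matrix.of fun x y => ∏ i, pauli1 (p i) (x i) (y i)

/-- The single-qubit Pauli `X_i, Y_i, Z_i` acting on qubit `i` of an `n`-qubit system. -/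
def sqPauli {n : ℕ} (i : Fin n) (k : Fin 3) : Matrix (QIdx n) (QIdx n) ℂ :=
  pauliString (fun j => if j = i then (⟨k.val + 1, by omega⟩ : Fin 4) else 0)

/-- Merge configurations on a region and its complement. -/
def merge {n : ℕ} (A : Finset (Fin n)) (u : {i : Fin n // i ∈ A} → Fin 2)
    (v : {i : Fin n // i ∉ A} → Fin 2) : QIdx n :=
  fun i => if h : i ∈ A then u ⟨i, h⟩ else v ⟨i, h⟩

/-- Restriction of a configuration to a region. -/
def restr {n : ℕ} (A : Finset (Fin n)) (x : QIdx n) : {i : Fin n // i ∈ A} → Fin 2 :=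
  fun i => x i.1

/-- Restriction of a configuration to the complement of a region. -/
def restrC {n : ℕ} (A : Finset (Fin n)) (x : QIdx n) : {i : Fin n // i ∉ A} → Fin 2 :=
  fun i => x i.1

/-- The partial trace onto region `A` (tracing out the complement). -/
def ptrace {n : ℕ} (A : Finset (Fin n)) (σ : Matrix (QIdx n) (QIdx n) ℂ) :
    Matrix ({i : Fin n // i ∈ A} → Fin 2) ({i : Fin n // i ∈ A} → Fin 2) ℂ :=
  Matrix.of fun a b => ∑ v : {i : Fin n // i ∉ A} → Fin 2, σ (merge A a v) (merge A b v)

/-- The partial trace onto the complement of region `A`. -/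
def ptraceC {n : ℕ} (A : Finset (Fin n)) (σ : Matrix (QIdx n) (QIdx n) ℂ) :
    Matrix ({i : Fin n // i ∉ A} → Fin 2) ({i : Fin n // i ∉ A} → Fin 2) ℂ :=
  Matrix.of fun u v => ∑ a : {i : Fin n // i ∈ A} → Fin 2, σ (merge A a u) (merge A a v)

/-- The mutual information `I(A : Ā)_σ = S(σ_A) + S(σ_Ā) - S(σ)`. -/
def mutualInfo {n : ℕ} (A : Finset (Fin n)) (σ : Matrix (QIdx n) (QIdx n) ℂ) : ℝ :=
  entropy (ptrace A σ) + entropy (ptraceC A σ) - entropy σ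

/-- The product state `σ_Ā ⊗ σ_A`, reindexed on the full system. -/
def prodState {n : ℕ} (A : Finset (Fin n)) (σ : Matrix (QIdx n) (QIdx n) ℂ) :
    Matrix (QIdx n) (QIdx n) ℂ :=
  Matrix.of fun x y =>
    ptrace A σ (restr A x) (restr A y) * ptraceC A σ (restrC A x) (restrC A y)

/-- Extension `N ⊗ id` of a superoperator on region `A` to the full system. -/
def actOnRegion {n : ℕ} (A : Finset (Fin n))
    (N : Matrix ({i : Fin n // i ∈ A} → Fin 2) ({i : Fin n // i ∈ A} → Fin 2) ℂ →
         Matrix ({i : Fin n // i ∈ A} → Fin 2) ({i : Fin n // i ∈ A} → Fin 2) ℂ)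
    (X : Matrix (QIdx n) (QIdx n) ℂ) : Matrix (QIdx n) (QIdx n) ℂ :=
  Matrix.of fun x y =>
    N (Matrix.of fun a b => X (merge A a (restrC A x)) (merge A b (restrC A y)))
      (restr A x) (restr A y)

/-- The sum of the local Lindbladians with single-qubit Pauli jumps in region `A`
(with Gaussian width `ς = 1/β`). -/
def lindbladRegion {n : ℕ} (H : Matrix (QIdx n) (QIdx n) ℂ) (β : ℝ) (A : Finset (Fin n))
    (X : Matrix (QIdx n) (QIdx n) ℂ) : Matrix (QIdx n) (QIdx n) ℂ :=
  ∑ i ∈ A, ∑ k : Fin 3, lindblad H β (1/β) (sqPauli i k) X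

/-- The full thermal Lindbladian `L = -i[H,·] + Σ_a L_a` with all single-qubit Pauli jumps
(with Gaussian width `ς = 1/β`). -/
def fullLindblad {n : ℕ} (H : Matrix (QIdx n) (QIdx n) ℂ) (β : ℝ)
    (X : Matrix (QIdx n) (QIdx n) ℂ) : Matrix (QIdx n) (QIdx n) ℂ :=
  (-Complex.I) • (H * X - X * H) + ∑ i : Fin n, ∑ k : Fin 3, lindblad H β (1/β) (sqPauli i k) X

/-- A matrix on `n` qubits is supported on the set `S` of qubits. -/
def SupportedOn {n : ℕ} (S : Finset (Fin n)) (M : Matrix (QIdx n) (QIdx n) ℂ) : Prop :=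
  (∀ x y : QIdx n, (∃ i, i ∉ S ∧ x i ≠ y i) → M x y = 0) ∧
  (∀ x y x' y' : QIdx n, (∀ i ∈ S, x i = x' i) → (∀ i ∈ S, y i = y' i) →
    (∀ i, i ∉ S → x i = y i) → (∀ i, i ∉ S → x' i = y' i) → M x y = M x' y')


lemma traceNorm_eq_sum_abs {M : Matrix m m ℂ} (hM : M.IsHermitian) :
    traceNorm M = ∑ i, |hM.eigenvalues i| := by
  have hP := (Matrix.posSemidef_conjTranspose_mul_self M).1
  have h1 : traceNorm M = (cfc Real.sqrt (Mᴴ * M)).trace.re := by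
    rw [hP.cfc_eq, IsHermitian.cfc, Unitary.conjStarAlgAut_apply]; rfl
  have h2 : cfc Real.sqrt (Mᴴ * M) = cfc (fun x : ℝ => |x|) M := by
    rw [hM.eq, ← pow_two]
    refine (cfc_comp_pow Real.sqrt 2 M (ha := hM)).symm.trans ?_
    congr 1; funext x; exact Real.sqrt_sq_eq_abs x
  rw [h1, h2, hM.cfc_eq, IsHermitian.cfc, Unitary.conjStarAlgAut_apply, Matrix.trace_mul_cycle,
    Unitary.coe_star_mul_self, Matrix.one_mul, Matrix.trace_diagonal]
  simp

lemma re_diag_nonneg {A : Matrix m m ℂ} (hA : A.PosSemidef) (i : m) : 0 ≤ (A i i).re := by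
  have := hA.diag_nonneg (i := i)
  exact (Complex.le_def.mp this).1

lemma traceNorm_sub_le {A B : Matrix m m ℂ} (hA : A.PosSemidef) (hB : B.PosSemidef) :
    traceNorm (A - B) ≤ (A.trace).re + (B.trace).re := by
  have hM : (A - B).IsHermitian := hA.1.sub hB.1
  rw [traceNorm_eq_sum_abs hM]
  set U : Matrix m m ℂ := (hM.eigenvectorUnitary : Matrix m m ℂ) with hU
  have hU2 : U * star U = 1 := Unitary.coe_mul_star_self hM.eigenvectorUnitary
  have hdiag : star U * (A - B) * U = Matrix.diagonal (RCLike.ofReal ∘ hM.eigenvalues) := by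
    have := hM.conjStarAlgAut_star_eigenvectorUnitary
    rwa [Unitary.conjStarAlgAut_star_apply] at this
  set A' : Matrix m m ℂ := star U * A * U with hA'def
  set B' : Matrix m m ℂ := star U * B * U with hB'def
  have hA' : A'.PosSemidef := by
    rw [hA'def, Matrix.star_eq_conjTranspose]; exact hA.conjTranspose_mul_mul_same U
  have hB' : B'.PosSemidef := by
    rw [hB'def, Matrix.star_eq_conjTranspose]; exact hB.conjTranspose_mul_mul_same U
  have hdiff : A' - B' = Matrix.diagonal (RCLike.ofReal ∘ hM.eigenvalues) := by
    rw [hA'def, hB'def, ← hdiag, Matrix.mul_sub, Matrix.sub_mul]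
  have heig : ∀ i, hM.eigenvalues i = (A' i i).re - (B' i i).re := by
    intro i
    have := congrFun (congrFun hdiff i) i
    rw [Matrix.sub_apply, Matrix.diagonal_apply_eq] at this
    have := congrArg Complex.re this
    simpa using this.symm
  have htrA : A'.trace = A.trace := by
    rw [hA'def, Matrix.trace_mul_cycle, hU2, Matrix.one_mul]
  have htrB : B'.trace = B.trace := by
    rw [hB'def, Matrix.trace_mul_cycle, hU2, Matrix.one_mul]
  calc ∑ i, |hM.eigenvalues i| ≤ ∑ i, ((A' i i).re + (B' i i).re) := by
        refine Finset.sum_le_sum fun i _ => ?_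
        rw [heig i]
        have h1 := re_diag_nonneg hA' i
        have h2 := re_diag_nonneg hB' i
        rw [abs_sub_comm]
        calc |(B' i i).re - (A' i i).re| ≤ |(B' i i).re| + |(A' i i).re| := abs_sub _ _
          _ = (A' i i).re + (B' i i).re := by rw [abs_of_nonneg h1, abs_of_nonneg h2]; ring
    _ = (A.trace).re + (B.trace).re := by
        rw [Finset.sum_add_distrib, ← htrA, ← htrB, Matrix.trace, Matrix.trace]
        simp [Matrix.diag, Complex.re_sum]

instance frobUnif : UniformSpace (Matrix m m ℂ) :=
  (Matrix.frobeniusNormedAddCommGroup : NormedAddCommGroup (Matrix m m ℂ)).toUniformSpace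
instance frobTop : TopologicalSpace (Matrix m m ℂ) :=
  (Matrix.frobeniusNormedAddCommGroup : NormedAddCommGroup (Matrix m m ℂ)).toUniformSpace.toTopologicalSpace

set_option synthInstance.maxHeartbeats 1000000 in
set_option maxHeartbeats 1000000 in
lemma superExp_eq_exp (L : Matrix m m ℂ →ₗ[ℂ] Matrix m m ℂ) (s : ℝ) (X : Matrix m m ℂ) :
    superExp (⇑L) s X
      = NormedSpace.exp (s • LinearMap.toContinuousLinearMap (L.restrictScalars ℝ)) X := by
  haveI : FiniteDimensional ℝ (Matrix m m ℂ) := Module.Finite.matrix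
  set T := LinearMap.toContinuousLinearMap (L.restrictScalars ℝ) with hT
  have hsum : Summable fun k : ℕ => ((k.factorial : ℝ))⁻¹ • (s • T) ^ k :=
    NormedSpace.expSeries_summable' (𝕂 := ℝ) (s • T)
  have hTL : ∀ Z : Matrix m m ℂ, T Z = L Z := fun _ => rfl
  have hpow : ∀ (k : ℕ) (Y : Matrix m m ℂ), ((s • T) ^ k) Y = s ^ k • (⇑L)^[k] Y := by
    intro k
    induction k with
    | zero => intro Y; simp
    | succ k ih =>
      intro Y
      rw [pow_succ', ContinuousLinearMap.mul_apply, ih, ContinuousLinearMap.smul_apply,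
        T.map_smul,  hTL, ← Function.iterate_succ_apply' (⇑L), smul_smul, ← pow_succ']
  calc superExp (⇑L) s X = ∑' k : ℕ, ((s ^ k / (k.factorial : ℝ))) • (⇑L)^[k] X := rfl
    _ = ∑' k : ℕ, (((k.factorial : ℝ))⁻¹ • (s • T) ^ k) X := by
        refine tsum_congr fun k => ?_
        rw [ContinuousLinearMap.smul_apply, hpow, smul_smul]
        congr 1
        rw [div_eq_mul_inv, mul_comm]
    _ = NormedSpace.exp (s • T) X := by
        rw [NormedSpace.exp_eq_tsum (𝕂 := ℝ)]
        exact ((ContinuousLinearMap.apply ℝ (Matrix m m ℂ) X).map_tsum hsum).symm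

set_option synthInstance.maxHeartbeats 1000000 in
set_option maxHeartbeats 1000000 in

set_option synthInstance.maxHeartbeats 1000000 in
set_option maxHeartbeats 1000000 in
/-- Time-averaging forces metastability: the time-averaged state
`σ̄ = (1/t)∫₀ᵗ e^{sL}[σ₀] ds` satisfies `‖L[σ̄]‖₁ ≤ 2/t`. -/
theorem time_averaging_forces_metastability (n : ℕ) (t : ℝ) (ht : 0 < t)
    (L : Matrix (QIdx n) (QIdx n) ℂ →ₗ[ℂ] Matrix (QIdx n) (QIdx n) ℂ)
    (hTP : ∀ s : ℝ, 0 ≤ s → ∀ X : Matrix (QIdx n) (QIdx n) ℂ,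
      (superExp (⇑L) s X).trace = X.trace)
    (hPos : ∀ s : ℝ, 0 ≤ s → ∀ σ : Matrix (QIdx n) (QIdx n) ℂ,
      σ.PosSemidef → σ.trace = 1 → (superExp (⇑L) s σ).PosSemidef)
    (σ₀ : Matrix (QIdx n) (QIdx n) ℂ) (hσ₀ : σ₀.PosSemidef) (hσ₀1 : σ₀.trace = 1) :
    traceNorm (L (timeAvg (⇑L) t σ₀)) ≤ 2 / t := by
  haveI : FiniteDimensional ℝ (Matrix (QIdx n) (QIdx n) ℂ) := Module.Finite.matrix
  set T : Matrix (QIdx n) (QIdx n) ℂ →L[ℝ] Matrix (QIdx n) (QIdx n) ℂ :=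
    LinearMap.toContinuousLinearMap (L.restrictScalars ℝ) with hT
  set g : ℝ → Matrix (QIdx n) (QIdx n) ℂ := fun s => NormedSpace.exp (s • T) σ₀ with hgdef
  have hg : ∀ s, superExp (⇑L) s σ₀ = g s := fun s => superExp_eq_exp L s σ₀
  have hgc : Continuous g := by
    apply (ContinuousLinearMap.apply ℝ (Matrix (QIdx n) (QIdx n) ℂ) σ₀).continuous.comp
    exact continuous_iff_continuousAt.2 fun s => (hasDerivAt_exp_smul_const' (𝕂 := ℝ) T s).continuousAt
  have hderiv : ∀ s : ℝ, HasDerivAt g (T (g s)) s := by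
    intro s
    have h1 := hasDerivAt_exp_smul_const' (𝕂 := ℝ) T s
    have h2 := (ContinuousLinearMap.apply ℝ (Matrix (QIdx n) (QIdx n) ℂ)
      σ₀).hasFDerivAt.comp_hasDerivAt s h1
    exact h2
  have hTg : Continuous fun s => T (g s) := T.continuous.comp hgc
  have hInt : (∫ s in (0:ℝ)..t, T (g s)) = g t - g 0 :=
    intervalIntegral.integral_eq_sub_of_hasDerivAt (fun s _ => hderiv s)
      (hTg.intervalIntegrable 0 t)
  have hg0 : g 0 = σ₀ := by
    show NormedSpace.exp ((0:ℝ) • T) σ₀ = σ₀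
    have h0 : (0:ℝ) • T = 0 := zero_smul ℝ T
    rw [h0, NormedSpace.exp_zero, ContinuousLinearMap.one_apply]
  have havg : timeAvg (⇑L) t σ₀ = (1/t) • ∫ s in (0:ℝ)..t, g s := by
    unfold timeAvg
    congr 1
    exact intervalIntegral.integral_congr fun s _ => hg s
  have hLint : L (∫ s in (0:ℝ)..t, g s) = ∫ s in (0:ℝ)..t, T (g s) := by
    have := T.intervalIntegral_comp_comm (hgc.intervalIntegrable (μ := volume) 0 t)
    exact this.symm
  have hLavg : L (timeAvg (⇑L) t σ₀) = (1/t : ℝ) • (g t - σ₀) := by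
    rw [havg]
    have h3 : L ((1/t : ℝ) • ∫ s in (0:ℝ)..t, g s)
        = (1/t : ℝ) • L (∫ s in (0:ℝ)..t, g s) :=
      map_smul (L.restrictScalars ℝ) _ _
    rw [h3, hLint, hInt, hg0]
  have hρP : (g t).PosSemidef := hg t ▸ hPos t ht.le σ₀ hσ₀ hσ₀1
  have hρ1 : (g t).trace = 1 := by rw [← hg t]; rw [hTP t ht.le σ₀, hσ₀1]
  have hsmulP : ∀ {A : Matrix (QIdx n) (QIdx n) ℂ}, A.PosSemidef →
      ((1/t : ℝ) • A).PosSemidef := by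
    intro A hA
    have h1 : ((1/t : ℝ) • A) = ((1/t : ℝ) : ℂ) • A := by
      ext i j; simp [Complex.real_smul]
    rw [h1]
    have hc : (0:ℂ) ≤ ((1/t : ℝ) : ℂ) := Complex.zero_le_real.mpr (by positivity)
    exact hA.smul hc
  have key := traceNorm_sub_le (hsmulP hρP) (hsmulP hσ₀)
  rw [hLavg, smul_sub]
  have htr : ∀ {A : Matrix (QIdx n) (QIdx n) ℂ}, A.trace = 1 →
      (((1/t : ℝ) • A).trace).re = 1/t := by
    intro A hA1
    rw [Matrix.trace_smul, hA1]
    simp [Complex.smul_re]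
  rw [htr hρ1, htr hσ₀1] at key
  calc traceNorm ((1/t : ℝ) • g t - (1/t : ℝ) • σ₀) ≤ 1/t + 1/t := key
    _ = 2/t := by ring

end QMS
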